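/- For n ∈ ℕ define the family of subsets of {1,…,n}: M_n := { T ⊆ {1,…,n} : there exist a Fourier frequency ω ∈ F_n, s ∈ [0, √2], and δ = (δ₁,δ₂,δ₃) ∈ ℝ³ with ‖δ‖ = 1, such that T = { t ∈ {1,…,n} : 0 ≤ s ≤ δ₁ + δ₂ cos(ωt) + δ₃ sin(ωt) } }. Then the cardinality of M_n is at most (n+1)⁴. -/

import Mathlib

open scoped Classical
open Real

noncomputable section


lemma key1 (α : ℝ) (h0 : 0 ≤ α) (hπ : α < π) (y : ℝ) :
    Real.cos α ≤ Real.cos y ↔ toIcoMod Real.two_pi_pos 0 (y + α) ≤ 2 * α := by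
  set hp := Real.two_pi_pos
  set x := toIocMod hp (-π) y with hxdef
  have hxIoc : x ∈ Set.Ioc (-π) (-π + 2 * π) := toIocMod_mem_Ioc hp (-π) y
  have hx1 : -π < x := hxIoc.1
  have hx2 : x ≤ π := by linarith [hxIoc.2]
  have hyx : y = x + toIocDiv hp (-π) y • (2 * π) := by
    rw [hxdef, toIocMod, zsmul_eq_mul]; ring
  have hcos : Real.cos y = Real.cos x := by
    conv_lhs => rw [hyx]
    rw [zsmul_eq_mul]
    exact Real.cos_add_int_mul_two_pi x _
  have habs : Real.cos x = Real.cos |x| := (Real.cos_abs x).symm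
  have hmod : toIcoMod hp 0 (y + α) = toIcoMod hp 0 (x + α) := by
    conv_lhs => rw [hyx]
    rw [show x + toIocDiv hp (-π) y • (2 * π) + α = (x + α) + toIocDiv hp (-π) y • (2 * π) by ring]
    exact toIcoMod_add_zsmul hp 0 _ _
  rw [hcos, habs, hmod]
  constructor
  · intro h
    have hxa : |x| ≤ α := by
      by_contra hlt
      push_neg at hlt
      have hxπ : |x| ≤ π := abs_le.mpr ⟨by linarith, hx2⟩
      have := Real.strictAntiOn_cos ⟨h0, hπ.le⟩ ⟨(abs_nonneg x), hxπ⟩ hlt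
      linarith
    have hx0 : 0 ≤ x + α := by have := (abs_le.mp hxa).1; linarith
    have hx2a : x + α ≤ 2 * α := by have := (abs_le.mp hxa).2; linarith
    rw [(toIcoMod_eq_self hp).mpr ⟨hx0, by rw [zero_add]; linarith [Real.pi_pos]⟩]
    exact hx2a
  · intro h
    set g := toIcoMod hp 0 (x + α) with hg
    have hgIco : g ∈ Set.Ico (0:ℝ) (0 + 2 * π) := toIcoMod_mem_Ico hp 0 (x + α)
    have hgd : g = (x + α) - toIcoDiv hp 0 (x + α) • (2 * π) := rfl
    set k := toIcoDiv hp 0 (x + α)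
    have hk : x - (g - α) = k • (2 * π) := by rw [hgd]; ring
    have hk0 : k = 0 := by
      have h1 : -(2 * π) < (k : ℝ) * (2 * π) := by
        rw [← zsmul_eq_mul, ← hk]
        have : g - α ≤ α := by linarith
        linarith [hgIco.1]
      have h2 : (k : ℝ) * (2 * π) < 2 * π := by
        rw [← zsmul_eq_mul, ← hk]
        have : -α ≤ g - α := by linarith [hgIco.1]
        linarith
      have : |(k : ℝ)| < 1 := by
        rw [abs_lt]
        constructor <;> nlinarith [Real.pi_pos]
      have hk1 : |k| < 1 := by exact_mod_cast this
      rw [abs_lt] at hk1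
      omega
    have hxg : x = g - α := by
      have h' := hk; rw [hk0] at h'; simp at h'; linarith
    have : |x| ≤ α := by
      rw [hxg, abs_le]; constructor <;> linarith [hgIco.1]
    calc Real.cos α ≤ Real.cos |x| :=
          Real.cos_le_cos_of_nonneg_of_le_pi (abs_nonneg x) hπ.le this
      _ = Real.cos |x| := rfl

lemma arc_repr (n : ℕ) (ω a b c s : ℝ) :
    ((Finset.Icc 1 n).filter (fun t : ℕ => s ≤ a + b * Real.cos (ω * t) + c * Real.sin (ω * t)) = ∅)
  ∨ ((Finset.Icc 1 n).filter (fun t : ℕ => s ≤ a + b * Real.cos (ω * t) + c * Real.sin (ω * t)) = Finset.Icc 1 n)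
  ∨ (∃ u ∈ Finset.Icc 1 n, ∃ v ∈ Finset.Icc 1 n,
      (Finset.Icc 1 n).filter (fun t : ℕ => s ≤ a + b * Real.cos (ω * t) + c * Real.sin (ω * t))
        = (Finset.Icc 1 n).filter (fun t : ℕ =>
            toIcoMod Real.two_pi_pos 0 (ω * t - ω * u) ≤ toIcoMod Real.two_pi_pos 0 (ω * v - ω * u))) := by
  set hp := Real.two_pi_pos
  set T := (Finset.Icc 1 n).filter (fun t : ℕ => s ≤ a + b * Real.cos (ω * t) + c * Real.sin (ω * t)) with hT
  by_cases hbc : b = 0 ∧ c = 0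
  · obtain ⟨hb, hc⟩ := hbc
    by_cases hsa : s ≤ a
    · right; left
      rw [hT, Finset.filter_true_of_mem]
      intro t _; rw [hb, hc]; simpa using hsa
    · left
      rw [hT, Finset.filter_false_of_mem]
      intro t _; rw [hb, hc]; push_neg at hsa ⊢; simpa using hsa
  · -- nondegenerate case
    have hR : 0 < Real.sqrt (b ^ 2 + c ^ 2) := by
      apply Real.sqrt_pos.mpr
      rcases not_and_or.mp hbc with h | h <;> positivity
    set R := Real.sqrt (b ^ 2 + c ^ 2) with hRdef
    set z : ℂ := ⟨b, c⟩ with hz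
    have hz0 : z ≠ 0 := by
      intro h
      apply hbc
      constructor
      · simpa using congrArg Complex.re h
      · simpa using congrArg Complex.im h
    have habs : ‖z‖ = R := by
      rw [Complex.norm_def, Complex.normSq_mk, hRdef]
      ring_nf
    set φ := Complex.arg z with hφ
    have hbR : b = R * Real.cos φ := by
      rw [hφ, Complex.cos_arg hz0, habs]
      field_simp
      rfl
    have hcR : c = R * Real.sin φ := by
      rw [hφ, Complex.sin_arg, habs]
      field_simp
      rfl
    set c₀ := (s - a) / R with hc₀
    have hcond : ∀ x : ℝ, (s ≤ a + b * Real.cos x + c * Real.sin x) ↔ c₀ ≤ Real.cos (x - φ) := by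
      intro x
      rw [hbR, hcR, hc₀, div_le_iff₀ hR]
      rw [Real.cos_sub]
      constructor <;> intro h <;> nlinarith
    by_cases hc1 : 1 < c₀
    · left
      rw [hT, Finset.filter_false_of_mem]
      intro t _
      rw [hcond]
      push_neg
      exact lt_of_le_of_lt (Real.cos_le_one _) hc1
    by_cases hc2 : c₀ ≤ -1
    · right; left
      rw [hT, Finset.filter_true_of_mem]
      intro t _
      rw [hcond]
      exact hc2.trans (Real.neg_one_le_cos _)
    · push_neg at hc1 hc2
      set α := Real.arccos c₀ with hα
      have hcosα : Real.cos α = c₀ := Real.cos_arccos hc2.le hc1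
      have hα0 : 0 ≤ α := Real.arccos_nonneg c₀
      have hαπ : α < π := by
        rcases lt_or_eq_of_le (Real.arccos_le_pi c₀) with h | h
        · exact h
        · exfalso; rw [hα] at hcosα; rw [h] at hcosα
          rw [Real.cos_pi] at hcosα; linarith
      set g : ℕ → ℝ := fun t => toIcoMod hp 0 ((ω * t - φ) + α) with hgdef
      have hmem : ∀ t : ℕ, (s ≤ a + b * Real.cos (ω * t) + c * Real.sin (ω * t)) ↔ g t ≤ 2 * α := by
        intro t
        rw [hcond, ← hcosα, key1 α hα0 hαπ]
      by_cases hTe : T = ∅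
      · left; exact hTe
      · right; right
        have hTne : T.Nonempty := Finset.nonempty_of_ne_empty hTe
        obtain ⟨u, huT, hu_min⟩ := Finset.exists_min_image T g hTne
        obtain ⟨v, hvT, hv_max⟩ := Finset.exists_max_image T g hTne
        have huIcc : u ∈ Finset.Icc 1 n := (Finset.mem_filter.mp huT).1
        have hvIcc : v ∈ Finset.Icc 1 n := (Finset.mem_filter.mp hvT).1
        have hgu2 : g u ≤ 2 * α := (hmem u).mp (Finset.mem_filter.mp huT).2
        have hgv2 : g v ≤ 2 * α := (hmem v).mp (Finset.mem_filter.mp hvT).2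
        have hguv : g u ≤ g v := hu_min v hvT
        have hgIco : ∀ t : ℕ, g t ∈ Set.Ico (0:ℝ) (0 + 2 * π) := fun t => toIcoMod_mem_Ico hp 0 _
        -- relation: toIcoMod hp 0 (ω t - ω w) = toIcoMod hp 0 (g t - g w)
        have hrel : ∀ t w : ℕ, toIcoMod hp 0 (ω * t - ω * w) = toIcoMod hp 0 (g t - g w) := by
          intro t w
          have ht' : g t = (ω * t - φ + α) - toIcoDiv hp 0 (ω * t - φ + α) • (2 * π) := rfl
          have hw' : g w = (ω * w - φ + α) - toIcoDiv hp 0 (ω * w - φ + α) • (2 * π) := rfl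
          have : ω * t - ω * w = (g t - g w) + (toIcoDiv hp 0 (ω * t - φ + α) - toIcoDiv hp 0 (ω * w - φ + α)) • (2 * π) := by
            rw [ht', hw', sub_zsmul]; ring
          rw [this, toIcoMod_add_zsmul]
        use u, huIcc, v, hvIcc
        apply Finset.filter_congr
        intro t htIcc
        have h2απ : 2 * α < 2 * π := by linarith
        rw [hmem t, hrel t u, hrel v u]
        have hvu : toIcoMod hp 0 (g v - g u) = g v - g u := by
          apply (toIcoMod_eq_self hp).mpr
          constructor
          · linarith
          · rw [zero_add]; linarith [(hgIco v).2, (hgIco u).1]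
        rw [hvu]
        constructor
        · intro h
          have htT : t ∈ T := Finset.mem_filter.mpr ⟨htIcc, (hmem t).mpr h⟩
          have hut : g u ≤ g t := hu_min t htT
          have htv : g t ≤ g v := hv_max t htT
          rw [(toIcoMod_eq_self hp).mpr ⟨by linarith, by rw [zero_add]; linarith [(hgIco t).2, (hgIco u).1]⟩]
          linarith
        · intro h
          by_contra hgt
          push_neg at hgt
          have htu : toIcoMod hp 0 (g t - g u) = g t - g u := by
            apply (toIcoMod_eq_self hp).mpr
            constructor
            · linarith
            · rw [zero_add]; linarith [(hgIco t).2, (hgIco u).1]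
          rw [htu] at h
          linarith


/-- The family `M_n` of subsets of `{1, …, n}` cut out by the harmonic functions
`t ↦ δ₁ + δ₂ cos(ωt) + δ₃ sin(ωt)` at level `s`, over all Fourier frequencies
`ω ∈ F_n`, levels `s ∈ [0, √2]`, and unit vectors `δ ∈ ℝ³`. -/
def Mset (n : ℕ) : Set (Finset ℕ) :=
  { T | ∃ j ∈ Finset.Icc 1 (n / 2), ∃ s ∈ Set.Icc (0 : ℝ) (Real.sqrt 2),
      ∃ δ : EuclideanSpace ℝ (Fin 3), ‖δ‖ = 1 ∧
        T = (Finset.Icc 1 n).filter fun t : ℕ =>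
          0 ≤ s ∧ s ≤ δ 0 + δ 1 * Real.cos (2 * Real.pi * j / n * t)
            + δ 2 * Real.sin (2 * Real.pi * j / n * t) }

/-- Lemma A.10: the family `M_n` has cardinality at most `(n+1)⁴`. -/
theorem statement18 (n : ℕ) : (Mset n).Finite ∧ (Mset n).ncard ≤ (n + 1) ^ 4 := by
  rcases eq_or_ne n 0 with rfl | hn
  · have h : Mset 0 = ∅ := by
      ext T
      simp only [Mset, Set.mem_setOf_eq, Set.mem_empty_iff_false, iff_false]
      rintro ⟨j, hj, -⟩
      simp at hj
    rw [h]
    exact ⟨Set.finite_empty, by simp⟩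
  · have hn1 : 1 ≤ n := Nat.one_le_iff_ne_zero.mpr hn
    set F : ℕ × ℕ × ℕ → Finset ℕ := fun p =>
      (Finset.Icc 1 n).filter fun t : ℕ =>
        toIcoMod Real.two_pi_pos 0 (2 * Real.pi * p.1 / n * t - 2 * Real.pi * p.1 / n * p.2.1)
          ≤ toIcoMod Real.two_pi_pos 0 (2 * Real.pi * p.1 / n * p.2.2 - 2 * Real.pi * p.1 / n * p.2.1)
      with hF
    set S : Finset (Finset ℕ) :=
      insert ∅ (insert (Finset.Icc 1 n)
        ((Finset.Icc 1 (n / 2) ×ˢ Finset.Icc 1 n ×ˢ Finset.Icc 1 n).image F)) with hS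
    have hsub : Mset n ⊆ ↑S := by
      rintro T ⟨j, hj, s, hs, δ, -, hTeq⟩
      have hTeq' : T = (Finset.Icc 1 n).filter fun t : ℕ =>
          s ≤ δ 0 + δ 1 * Real.cos (2 * Real.pi * j / n * t)
            + δ 2 * Real.sin (2 * Real.pi * j / n * t) := by
        rw [hTeq]
        apply Finset.filter_congr
        intro t _
        simp [hs.1]
      rcases arc_repr n (2 * Real.pi * j / n) (δ 0) (δ 1) (δ 2) s with h | h | ⟨u, hu, v, hv, h⟩
      · rw [hTeq', h]
        simp [hS]
      · rw [hTeq', h]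
        simp [hS]
      · rw [hTeq', h]
        rw [hS]
        simp only [Finset.coe_insert, Set.mem_insert_iff, Finset.mem_coe]
        right; right
        apply Finset.mem_image.mpr
        exact ⟨(j, u, v), by simp [Finset.mem_product, hj, hu, hv], rfl⟩
    have hfin : (Mset n).Finite := Set.Finite.subset S.finite_toSet hsub
    refine ⟨hfin, ?_⟩
    calc (Mset n).ncard ≤ (↑S : Set (Finset ℕ)).ncard :=
          Set.ncard_le_ncard hsub S.finite_toSet
      _ = S.card := Set.ncard_coe_finset S
      _ ≤ 2 + (n / 2) * (n * n) := by
          apply le_trans (Finset.card_insert_le _ _)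
          have h2 := Finset.card_insert_le (Finset.Icc 1 n)
            ((Finset.Icc 1 (n / 2) ×ˢ Finset.Icc 1 n ×ˢ Finset.Icc 1 n).image F)
          have h3 := Finset.card_image_le (s := Finset.Icc 1 (n / 2) ×ˢ Finset.Icc 1 n ×ˢ Finset.Icc 1 n) (f := F)
          simp only [Finset.card_product, Nat.card_Icc, Nat.add_sub_cancel] at h3
          omega
      _ ≤ (n + 1) ^ 4 := by
          have h4 : n / 2 ≤ n := Nat.div_le_self n 2
          have : (n / 2) * (n * n) ≤ n * (n * n) := Nat.mul_le_mul_right _ h4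
          nlinarith [hn1]
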